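/- Let L ≥ 1, let B ∈ ℝ^{L×L} satisfy ∑_{l=0}^{L−1} b_{l,m}² = 1 for every m, let α_l ≥ 0 for all l, and let 0 < σ² ≤ σ'². Let sir_m(i) and sir'_m(i) denote the density-evolution sequences with noise variances σ² and σ'² respectively, i.e., sir_m(0) = 0 and, for i ≥ 1, sir_m(i) = ∑_l b_{l,m}²/(σ² + α_l ∑_{m'} b_{l,m'}²·mmse(sir_{m'}(i−1))), and likewise with σ'². Then sir_m(i) ≥ sir'_m(i) for all i and all m. -/

import Mathlib

/-- The minimum mean-squared error of the BPSK-input real AWGN channel with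
signal-to-noise ratio `s`. -/
noncomputable def mmse (s : ℝ) : ℝ :=
  1 - ∫ z : ℝ,
    Real.tanh (s + Real.sqrt s * z) * ((Real.sqrt (2 * Real.pi))⁻¹ * Real.exp (-z ^ 2 / 2))

open Real MeasureTheory Set Filter

noncomputable def phi (z : ℝ) : ℝ := (Real.sqrt (2 * Real.pi))⁻¹ * Real.exp (-z ^ 2 / 2)

lemma phi_pos (z : ℝ) : 0 < phi z := by
  have h : 0 < Real.sqrt (2 * Real.pi) := Real.sqrt_pos.2 (by positivity)
  exact mul_pos (inv_pos.2 h) (Real.exp_pos _)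

lemma my_tanh_hasDerivAt (x : ℝ) : HasDerivAt Real.tanh (1 - Real.tanh x ^ 2) x := by
  have h := (Real.hasDerivAt_sinh x).div (Real.hasDerivAt_cosh x) (Real.cosh_pos x).ne'
  have he : Real.tanh = fun y => Real.sinh y / Real.cosh y :=
    funext Real.tanh_eq_sinh_div_cosh
  rw [he]
  convert h using 1
  all_goals try rfl
  beta_reduce
  have hc := (Real.cosh_pos x).ne'
  have hid := Real.cosh_sq_sub_sinh_sq x
  field_simp
  try nlinarith [hid]

lemma my_sinh_lt_cosh (x : ℝ) : Real.sinh x < Real.cosh x := by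
  rw [Real.sinh_eq, Real.cosh_eq]; have := Real.exp_pos (-x); linarith

lemma my_tanh_lt_one (x : ℝ) : Real.tanh x < 1 := by
  rw [Real.tanh_eq_sinh_div_cosh, div_lt_one (Real.cosh_pos x)]; exact my_sinh_lt_cosh x

lemma my_neg_one_lt_tanh (x : ℝ) : -1 < Real.tanh x := by
  rw [Real.tanh_eq_sinh_div_cosh, lt_div_iff₀ (Real.cosh_pos x)]
  have h := my_sinh_lt_cosh (-x)
  rw [Real.sinh_neg, Real.cosh_neg] at h
  linarith

lemma my_tanh_sq_le_one (x : ℝ) : Real.tanh x ^ 2 ≤ 1 := by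
  nlinarith [my_tanh_lt_one x, my_neg_one_lt_tanh x]

lemma my_abs_tanh_le_one (x : ℝ) : |Real.tanh x| ≤ 1 :=
  abs_le.2 ⟨(my_neg_one_lt_tanh x).le, (my_tanh_lt_one x).le⟩

lemma my_continuous_tanh : Continuous Real.tanh := by
  have he : Real.tanh = fun y => Real.sinh y / Real.cosh y :=
    funext Real.tanh_eq_sinh_div_cosh
  rw [he]
  exact Real.continuous_sinh.div Real.continuous_cosh fun x => (Real.cosh_pos x).ne'

lemma my_tanh_monotone : Monotone Real.tanh := by
  apply monotone_of_deriv_nonneg (fun x => (my_tanh_hasDerivAt x).differentiableAt)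
  intro x
  rw [(my_tanh_hasDerivAt x).deriv]
  linarith [my_tanh_sq_le_one x]

lemma my_tanh_neg (x : ℝ) : Real.tanh (-x) = -Real.tanh x := by
  rw [Real.tanh_eq_sinh_div_cosh, Real.tanh_eq_sinh_div_cosh, Real.sinh_neg, Real.cosh_neg,
    neg_div]
lemma integrable_phi : Integrable phi := by
  have h : Integrable fun z : ℝ => Real.exp (-(1/2 : ℝ) * z ^ 2) :=
    integrable_exp_neg_mul_sq (by norm_num)
  have h2 := h.const_mul (Real.sqrt (2 * Real.pi))⁻¹
  apply h2.congr
  filter_upwards with z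
  unfold phi
  ring_nf

lemma integral_phi : ∫ z, phi z = 1 := by
  unfold phi
  rw [MeasureTheory.integral_const_mul]
  have h : ∫ z : ℝ, Real.exp (-z ^ 2 / 2) = Real.sqrt (2 * Real.pi) := by
    have h2 := integral_gaussian (1/2)
    have : ∀ z : ℝ, Real.exp (-z ^ 2 / 2) = Real.exp (-(1/2 : ℝ) * z ^ 2) := by
      intro z; ring_nf
    simp_rw [this, h2]
    rw [show Real.pi / (1/2) = 2 * Real.pi by ring]
  rw [h]
  have hpos : (0:ℝ) < Real.sqrt (2 * Real.pi) := Real.sqrt_pos.2 (by positivity)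
  field_simp

lemma integrable_abs_mul_phi : Integrable (fun z => |z| * phi z) := by
  have h := (integrable_mul_exp_neg_mul_sq (by norm_num : (0:ℝ) < 1/2)).abs
  have h2 := h.const_mul (Real.sqrt (2 * Real.pi))⁻¹
  apply h2.congr
  filter_upwards with z
  unfold phi
  rw [abs_mul, abs_of_nonneg (Real.exp_pos _).le]
  ring_nf

lemma integrable_bdd_mul_phi {f : ℝ → ℝ} (hf : Continuous f) {C : ℝ}
    (hC : ∀ x, |f x| ≤ C) : Integrable (fun z => f z * phi z) :=
  integrable_phi.bdd_mul hf.aestronglyMeasurable (Filter.Eventually.of_forall fun x => by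
    simpa [Real.norm_eq_abs] using hC x)

lemma tendsto_phi_atTop : Tendsto phi atTop (nhds 0) := by
  have h1 : Tendsto (fun z : ℝ => -z ^ 2 / 2) atTop atBot := by
    apply Tendsto.atBot_div_const (by norm_num)
    exact tendsto_neg_atBot_iff.2 (tendsto_pow_atTop (by norm_num))
  have h2 := (Real.tendsto_exp_atBot.comp h1).const_mul (Real.sqrt (2 * Real.pi))⁻¹
  rw [mul_zero] at h2
  exact h2.congr fun z => by simp only [Function.comp_apply, phi]

lemma phi_neg (z : ℝ) : phi (-z) = phi z := by simp [phi]

lemma tendsto_phi_atBot : Tendsto phi atBot (nhds 0) := by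
  have h := tendsto_phi_atTop.comp tendsto_neg_atBot_atTop
  exact h.congr fun z => by simp only [Function.comp_apply, phi_neg]

lemma phi_hasDerivAt (z : ℝ) : HasDerivAt phi (-z * phi z) z := by
  have h1 : HasDerivAt (fun z : ℝ => -z ^ 2 / 2) (-z) z := by
    have h0 := ((hasDerivAt_pow 2 z).neg).div_const 2
    convert h0 using 1
    all_goals try rfl
    simp
    ring
  have h2 := (Real.hasDerivAt_exp _).comp z h1
  have h3 := h2.const_mul (Real.sqrt (2 * Real.pi))⁻¹
  have : phi = fun z => (Real.sqrt (2 * Real.pi))⁻¹ * Real.exp (-z ^ 2 / 2) := rfl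
  rw [this]
  convert h3 using 1
  all_goals try rfl
  simp only [phi]
  ring

lemma continuous_phi : Continuous phi :=
  continuous_const.mul ((continuous_pow 2).neg.div_const 2).rexp

noncomputable def gfun (s : ℝ) : ℝ := ∫ z, Real.tanh (s + Real.sqrt s * z) * phi z

lemma integrable_tanh_phi (a b : ℝ) :
    Integrable (fun z => Real.tanh (a + b * z) * phi z) :=
  integrable_bdd_mul_phi (my_continuous_tanh.comp (continuous_const.add
    (continuous_const.mul continuous_id))) (fun x => my_abs_tanh_le_one _)

lemma gfun_hasDerivAt {s : ℝ} (hs : 0 < s) :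
    Integrable (fun z => (1 - Real.tanh (s + Real.sqrt s * z) ^ 2) *
        (1 + 1 / (2 * Real.sqrt s) * z) * phi z) ∧
      HasDerivAt gfun
        (∫ z, (1 - Real.tanh (s + Real.sqrt s * z) ^ 2) *
          (1 + 1 / (2 * Real.sqrt s) * z) * phi z) s := by
  have hs2 : (0:ℝ) < s / 2 := by linarith
  have hsq2 : 0 < Real.sqrt (s / 2) := Real.sqrt_pos.2 hs2
  refine hasDerivAt_integral_of_dominated_loc_of_deriv_le
    (s := Metric.ball s (s / 2)) (F := fun x z => Real.tanh (x + Real.sqrt x * z) * phi z)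
    (F' := fun x z => (1 - Real.tanh (x + Real.sqrt x * z) ^ 2) *
      (1 + 1 / (2 * Real.sqrt x) * z) * phi z)
    (bound := fun z => (1 + 1 / (2 * Real.sqrt (s / 2)) * |z|) * phi z)
    (Metric.ball_mem_nhds s hs2) ?_ ?_ ?_ ?_ ?_ ?_
  · filter_upwards with x
    exact ((my_continuous_tanh.comp (continuous_const.add
      (continuous_const.mul continuous_id))).mul continuous_phi).aestronglyMeasurable
  · exact integrable_tanh_phi s (Real.sqrt s)
  · apply Continuous.aestronglyMeasurable
    apply Continuous.mul _ continuous_phi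
    apply Continuous.mul _ (continuous_const.add (continuous_const.mul continuous_id))
    exact continuous_const.sub ((my_continuous_tanh.comp (continuous_const.add
      (continuous_const.mul continuous_id))).pow 2)
  · filter_upwards with z
    intro x hx
    rw [Metric.mem_ball, Real.dist_eq] at hx
    have hx2 : s / 2 < x := by
      rcases abs_lt.1 hx with ⟨h1, _⟩; linarith
    have hsqx : Real.sqrt (s / 2) ≤ Real.sqrt x := Real.sqrt_le_sqrt (by linarith)
    have hsqxpos : 0 < Real.sqrt x := Real.sqrt_pos.2 (by linarith)
    have hT : |1 - Real.tanh (x + Real.sqrt x * z) ^ 2| ≤ 1 := by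
      rw [abs_le]
      constructor
      · nlinarith [my_tanh_sq_le_one (x + Real.sqrt x * z), sq_nonneg (Real.tanh (x + Real.sqrt x * z))]
      · nlinarith [sq_nonneg (Real.tanh (x + Real.sqrt x * z))]
    have hc : 1 / (2 * Real.sqrt x) ≤ 1 / (2 * Real.sqrt (s / 2)) := by
      apply one_div_le_one_div_of_le (by positivity)
      linarith
    have hlin : |1 + 1 / (2 * Real.sqrt x) * z| ≤ 1 + 1 / (2 * Real.sqrt (s / 2)) * |z| := by
      calc |1 + 1 / (2 * Real.sqrt x) * z| ≤ 1 + |1 / (2 * Real.sqrt x) * z| := by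
            simpa using abs_add_le 1 (1 / (2 * Real.sqrt x) * z)
        _ ≤ 1 + 1 / (2 * Real.sqrt (s / 2)) * |z| := by
            rw [abs_mul, abs_of_nonneg (by positivity : (0:ℝ) ≤ 1 / (2 * Real.sqrt x))]
            have := mul_le_mul_of_nonneg_right hc (abs_nonneg z)
            linarith
    rw [Real.norm_eq_abs, abs_mul, abs_mul, abs_of_nonneg (phi_pos z).le]
    have h1 : |1 - Real.tanh (x + Real.sqrt x * z) ^ 2| * |1 + 1 / (2 * Real.sqrt x) * z| ≤
        1 * (1 + 1 / (2 * Real.sqrt (s / 2)) * |z|) := by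
      apply mul_le_mul hT hlin (abs_nonneg _) zero_le_one
    have := mul_le_mul_of_nonneg_right h1 (phi_pos z).le
    linarith [this]
  · have h1 : Integrable (fun z : ℝ => phi z + 1 / (2 * Real.sqrt (s / 2)) * (|z| * phi z)) :=
      integrable_phi.add (integrable_abs_mul_phi.const_mul _)
    apply h1.congr
    filter_upwards with z
    ring
  · filter_upwards with z
    intro x hx
    rw [Metric.mem_ball, Real.dist_eq] at hx
    have hx2 : 0 < x := by
      rcases abs_lt.1 hx with ⟨h1, _⟩; linarith
    have hsqd := Real.hasDerivAt_sqrt hx2.ne'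
    have hinner : HasDerivAt (fun y => y + Real.sqrt y * z)
        (1 + 1 / (2 * Real.sqrt x) * z) x := (hasDerivAt_id x).add (hsqd.mul_const z)
    have htanh := (my_tanh_hasDerivAt (x + Real.sqrt x * z)).comp x hinner
    have h2 := htanh.mul_const (phi z)
    exact h2

lemma stein_deriv_nonneg {s : ℝ} (hs : 0 < s) :
    0 ≤ ∫ z, (1 - Real.tanh (s + Real.sqrt s * z) ^ 2) *
        (1 + 1 / (2 * Real.sqrt s) * z) * phi z := by
  set b := Real.sqrt s with hbdef
  have hb : 0 < b := Real.sqrt_pos.2 hs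
  set T : ℝ → ℝ := fun z => Real.tanh (s + b * z) with hT
  have hTcont : Continuous T :=
    my_continuous_tanh.comp (continuous_const.add (continuous_const.mul continuous_id))
  have hTle : ∀ z, |T z| ≤ 1 := fun z => my_abs_tanh_le_one _
  have hfle : ∀ z, 0 ≤ 1 - T z ^ 2 := fun z => by nlinarith [my_tanh_sq_le_one (s + b * z)]
  have hfle1 : ∀ z, 1 - T z ^ 2 ≤ 1 := fun z => by nlinarith [sq_nonneg (T z)]
  -- the function h and its derivative
  set f : ℝ → ℝ := fun z => 1 - T z ^ 2 with hf
  set f' : ℝ → ℝ := fun z => -(2 * T z * ((1 - T z ^ 2) * b)) with hf'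
  have hfcont : Continuous f := continuous_const.sub (hTcont.pow 2)
  have hf'cont : Continuous f' :=
    ((continuous_const.mul hTcont).mul ((continuous_const.sub (hTcont.pow 2)).mul
      continuous_const)).neg
  have hderiv : ∀ z : ℝ, HasDerivAt (fun z => f z * phi z)
      (f' z * phi z + f z * (-z * phi z)) z := by
    intro z
    have hinner : HasDerivAt (fun z : ℝ => s + b * z) b z := by
      simpa using ((hasDerivAt_id z).const_mul b).const_add s
    have hTd : HasDerivAt T ((1 - T z ^ 2) * b) z := by
      have := (my_tanh_hasDerivAt (s + b * z)).comp z hinner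
      exact this
    have hfd : HasDerivAt f (f' z) z := by
      have := (hTd.pow 2).const_sub 1
      simpa [hf', pow_one] using this
    exact hfd.mul (phi_hasDerivAt z)
  -- integrabilities
  have hI1 : Integrable (fun z => f' z * phi z) := by
    apply integrable_bdd_mul_phi hf'cont (C := 2 * b)
    intro z
    have h1 : |f' z| = 2 * |T z| * (1 - T z ^ 2) * b := by
      rw [hf']
      rw [abs_neg, abs_mul, abs_mul, abs_mul]
      rw [abs_of_nonneg (hfle z), abs_of_nonneg hb.le]
      simp [abs_mul, abs_two]
      ring
    rw [h1]
    have h6 : |T z| * (1 - T z ^ 2) ≤ 1 * 1 :=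
      mul_le_mul (hTle z) (hfle1 z) (hfle z) zero_le_one
    nlinarith [h6, hb.le]
  have hI2 : Integrable (fun z => z * (f z * phi z)) := by
    apply integrable_abs_mul_phi.mono'
      ((continuous_id.mul (hfcont.mul continuous_phi)).aestronglyMeasurable)
    filter_upwards with z
    rw [Real.norm_eq_abs, Pi.mul_apply, Pi.mul_apply, id, abs_mul, abs_mul, abs_of_nonneg (hfle z),
      abs_of_nonneg (phi_pos z).le]
    have h2 : (1 - T z ^ 2) * phi z ≤ 1 * phi z :=
      mul_le_mul_of_nonneg_right (hfle1 z) (phi_pos z).le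
    have h3 := mul_le_mul_of_nonneg_left h2 (abs_nonneg z)
    simpa using h3
  have hItot : Integrable (fun z => f' z * phi z + f z * (-z * phi z)) := by
    apply (hI1.sub hI2).congr
    filter_upwards with z
    simp only [Pi.sub_apply]
    ring
  -- limits of h at ±∞
  have hh0 : ∀ z, 0 ≤ f z * phi z := fun z => mul_nonneg (hfle z) (phi_pos z).le
  have hh1 : ∀ z, f z * phi z ≤ phi z := fun z => by
    show (1 - T z ^ 2) * phi z ≤ phi z
    have := mul_le_mul_of_nonneg_right (hfle1 z) (phi_pos z).le
    linarith
  have htop : Tendsto (fun z => f z * phi z) atTop (nhds 0) :=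
    tendsto_of_tendsto_of_tendsto_of_le_of_le tendsto_const_nhds tendsto_phi_atTop hh0 hh1
  have hbot : Tendsto (fun z => f z * phi z) atBot (nhds 0) :=
    tendsto_of_tendsto_of_tendsto_of_le_of_le tendsto_const_nhds tendsto_phi_atBot hh0 hh1
  have hcont : Continuous (fun z => f z * phi z) := hfcont.mul continuous_phi
  -- FTC on the two half-lines
  have hIoi : ∫ z in Ioi (0:ℝ), (f' z * phi z + f z * (-z * phi z)) =
      0 - f 0 * phi 0 :=
    integral_Ioi_of_hasDerivAt_of_tendsto hcont.continuousWithinAt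
      (fun x _ => hderiv x) hItot.integrableOn htop
  have hIic : ∫ z in Iic (0:ℝ), (f' z * phi z + f z * (-z * phi z)) =
      f 0 * phi 0 - 0 :=
    integral_Iic_of_hasDerivAt_of_tendsto hcont.continuousWithinAt
      (fun x _ => hderiv x) hItot.integrableOn hbot
  have hkey : ∫ z, (f' z * phi z + f z * (-z * phi z)) = 0 := by
    rw [← intervalIntegral.integral_Iic_add_Ioi hItot.integrableOn hItot.integrableOn, hIoi, hIic]
    ring
  -- Stein identity
  have hstein : ∫ z, z * (f z * phi z) = ∫ z, f' z * phi z := by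
    have h3 : ∫ z, (f' z * phi z + f z * (-z * phi z)) =
        (∫ z, f' z * phi z) - ∫ z, z * (f z * phi z) := by
      rw [show (fun z => f' z * phi z + f z * (-z * phi z)) =
        (fun z => f' z * phi z - z * (f z * phi z)) from funext fun z => by ring]
      exact integral_sub hI1 hI2
    rw [h3] at hkey
    linarith
  -- put everything together
  have hfin : (fun z => (1 - T z ^ 2) * (1 + 1 / (2 * b) * z) * phi z) =
      fun z => f z * phi z + (1 / (2 * b)) * (z * (f z * phi z)) := by
    funext z
    simp only [hf]
    ring
  have hIf : Integrable (fun z => f z * phi z) :=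
    integrable_bdd_mul_phi hfcont (C := 1) fun z => by
      rw [abs_of_nonneg (hfle z)]; exact hfle1 z
  calc (0:ℝ) ≤ ∫ z, (f z + (1 / (2 * b)) * f' z) * phi z := by
        apply integral_nonneg
        intro z
        simp only [Pi.zero_apply]
        show 0 ≤ (f z + 1 / (2 * b) * f' z) * phi z
        have h4 : f z + (1 / (2 * b)) * f' z = (1 - T z ^ 2) * (1 - T z) := by
          simp only [hf, hf']
          field_simp
          ring
        rw [h4]
        have h5 : 0 ≤ 1 - T z := by linarith [(my_tanh_lt_one (s + b * z)).le]
        exact mul_nonneg (mul_nonneg (hfle z) h5) (phi_pos z).le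
    _ = (∫ z, f z * phi z) + (1 / (2 * b)) * ∫ z, f' z * phi z := by
        rw [show (fun z => (f z + (1 / (2 * b)) * f' z) * phi z) =
          (fun z => f z * phi z + (1 / (2 * b)) * (f' z * phi z)) from funext fun z => by ring]
        rw [integral_add hIf (hI1.const_mul _), MeasureTheory.integral_const_mul]
    _ = (∫ z, f z * phi z) + (1 / (2 * b)) * ∫ z, z * (f z * phi z) := by rw [hstein]
    _ = ∫ z, f z * phi z + (1 / (2 * b)) * (z * (f z * phi z)) := by
        rw [integral_add hIf ((hI2.const_mul _)), MeasureTheory.integral_const_mul]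
    _ = ∫ z, (1 - T z ^ 2) * (1 + 1 / (2 * b) * z) * phi z := by rw [hfin]

lemma integrable_tanh_phi' (t : ℝ) :
    Integrable (fun z => Real.tanh (t - Real.sqrt t * z) * phi z) := by
  apply (integrable_tanh_phi t (-(Real.sqrt t))).congr
  filter_upwards with z
  ring_nf

lemma gfun_nonneg {t : ℝ} (ht : 0 ≤ t) : 0 ≤ gfun t := by
  have h1 : gfun t = ∫ z, Real.tanh (t - Real.sqrt t * z) * phi z := by
    rw [gfun, ← integral_neg_eq_self (fun z => Real.tanh (t - Real.sqrt t * z) * phi z)]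
    congr 1
    funext z
    rw [phi_neg, mul_neg, sub_neg_eq_add]
  have h2 : 0 ≤ gfun t + gfun t := by
    nth_rewrite 2 [h1]
    rw [gfun, ← integral_add (integrable_tanh_phi t (Real.sqrt t)) (integrable_tanh_phi' t)]
    apply integral_nonneg
    intro z
    have h3 : Real.tanh (Real.sqrt t * z - t) ≤ Real.tanh (t + Real.sqrt t * z) :=
      my_tanh_monotone (by linarith)
    have h4 : Real.tanh (Real.sqrt t * z - t) = -Real.tanh (t - Real.sqrt t * z) := by
      rw [show Real.sqrt t * z - t = -(t - Real.sqrt t * z) by ring, my_tanh_neg]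
    rw [h4] at h3
    have := phi_pos z
    simp only [Pi.zero_apply]
    nlinarith
  linarith

lemma gfun_zero : gfun 0 = 0 := by
  rw [gfun]
  simp [Real.sqrt_zero, Real.tanh_zero]

lemma gfun_mono {s t : ℝ} (hs : 0 ≤ s) (hst : s ≤ t) : gfun s ≤ gfun t := by
  rcases eq_or_lt_of_le hs with h | h
  · rw [← h, gfun_zero]
    exact gfun_nonneg (by linarith)
  · have hmono : MonotoneOn gfun (Icc s t) := by
      apply monotoneOn_of_deriv_nonneg (convex_Icc s t)
      · intro x hx
        exact ((gfun_hasDerivAt (lt_of_lt_of_le h hx.1)).2.continuousAt).continuousWithinAt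
      · intro x hx
        rw [interior_Icc] at hx
        exact ((gfun_hasDerivAt (lt_trans h hx.1)).2).differentiableAt.differentiableWithinAt
      · intro x hx
        rw [interior_Icc] at hx
        have hx0 : 0 < x := lt_trans h hx.1
        rw [(gfun_hasDerivAt hx0).2.deriv]
        exact stein_deriv_nonneg hx0
    exact hmono (left_mem_Icc.2 hst) (right_mem_Icc.2 hst) hst


lemma mmse_eq (s : ℝ) : mmse s = 1 - gfun s := rfl

lemma mmse_nonneg (s : ℝ) : 0 ≤ mmse s := by
  rw [mmse_eq]
  have h1 : gfun s ≤ 1 := by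
    rw [gfun, ← integral_phi]
    apply integral_mono (integrable_tanh_phi s (Real.sqrt s)) integrable_phi
    intro z
    have := mul_le_mul_of_nonneg_right (my_tanh_lt_one (s + Real.sqrt s * z)).le (phi_pos z).le
    simpa using this
  linarith

lemma mmse_antitone {s t : ℝ} (hs : 0 ≤ s) (hst : s ≤ t) : mmse t ≤ mmse s := by
  rw [mmse_eq, mmse_eq]
  linarith [gfun_mono hs hst]
/-- **Monotonicity of density evolution in the noise variance.**
If `0 < σ² ≤ σ'²` and `sir`, `sir'` are the DE sequences with noise variances `σ²` and
`σ'²` respectively (same base matrix with unit column square-sums and same loads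
`α_l ≥ 0`), then `sir_m(i) ≥ sir'_m(i)` for all `i` and `m`. -/
theorem de_antitone_in_noise (L : ℕ) (hL : 1 ≤ L) (B : Fin L → Fin L → ℝ)
    (hB : ∀ m : Fin L, ∑ l : Fin L, (B l m) ^ 2 = 1)
    (α : Fin L → ℝ) (hα : ∀ l, 0 ≤ α l)
    (σ2 σ2' : ℝ) (hσ2 : 0 < σ2) (hσ2' : σ2 ≤ σ2')
    (sir sir' : ℕ → Fin L → ℝ)
    (hsir0 : ∀ m, sir 0 m = 0) (hsir0' : ∀ m, sir' 0 m = 0)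
    (hsir : ∀ i m, sir (i + 1) m =
      ∑ l : Fin L,
        (B l m) ^ 2 / (σ2 + α l * ∑ m' : Fin L, (B l m') ^ 2 * mmse (sir i m')))
    (hsir' : ∀ i m, sir' (i + 1) m =
      ∑ l : Fin L,
        (B l m) ^ 2 / (σ2' + α l * ∑ m' : Fin L, (B l m') ^ 2 * mmse (sir' i m'))) :
    ∀ i : ℕ, ∀ m : Fin L, sir' i m ≤ sir i m := by
  have key : ∀ i : ℕ, (∀ m, 0 ≤ sir' i m) ∧ (∀ m, sir' i m ≤ sir i m) := by
    intro i
    induction i with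
    | zero =>
      constructor <;> intro m <;> simp [hsir0, hsir0']
    | succ i ih =>
      obtain ⟨h0, hle⟩ := ih
      have hS : ∀ l : Fin L, 0 ≤ ∑ m' : Fin L, (B l m') ^ 2 * mmse (sir i m') := fun l =>
        Finset.sum_nonneg fun m' _ => mul_nonneg (sq_nonneg _) (mmse_nonneg _)
      have hS' : ∀ l : Fin L, 0 ≤ ∑ m' : Fin L, (B l m') ^ 2 * mmse (sir' i m') := fun l =>
        Finset.sum_nonneg fun m' _ => mul_nonneg (sq_nonneg _) (mmse_nonneg _)
      constructor
      · intro m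
        rw [hsir' i m]
        apply Finset.sum_nonneg
        intro l _
        apply div_nonneg (sq_nonneg _)
        have := mul_nonneg (hα l) (hS' l)
        linarith
      · intro m
        rw [hsir i m, hsir' i m]
        apply Finset.sum_le_sum
        intro l _
        have hden : 0 < σ2 + α l * ∑ m' : Fin L, (B l m') ^ 2 * mmse (sir i m') := by
          have := mul_nonneg (hα l) (hS l)
          linarith
        have hSS : (∑ m' : Fin L, (B l m') ^ 2 * mmse (sir i m')) ≤
            ∑ m' : Fin L, (B l m') ^ 2 * mmse (sir' i m') :=
          Finset.sum_le_sum fun m' _ =>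
            mul_le_mul_of_nonneg_left (mmse_antitone (h0 m') (hle m')) (sq_nonneg _)
        have hdle : (σ2 + α l * ∑ m' : Fin L, (B l m') ^ 2 * mmse (sir i m')) ≤
            σ2' + α l * ∑ m' : Fin L, (B l m') ^ 2 * mmse (sir' i m') := by
          have := mul_le_mul_of_nonneg_left hSS (hα l)
          linarith
        gcongr
  intro i m
  exact (key i).2 m
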